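/- Let I ⊆ L be finite, let ι : I → J be a bijection onto a subset J ⊆ L with I ∩ J = ∅, let (p_M)_{M ∈ D_I} be a probability distribution, and set Φ = Σ_{M ∈ D_I} p_M^{1/2} f_{M ι(M)} ∈ H and ρ_{ι(I)} = Σ_{M ∈ D_I} p_M |f_{ι(M)}⟩⟨f_{ι(M)}|. Then ⟨Φ, bΦ⟩ = Tr(ρ_{ι(I)} b) for all b ∈ A(ι(I)); that is, the pure state given by the vector Φ reduces to the state ρ_{ι(I)} on A(ι(I)). -/

import Mathlib

noncomputable section
open scoped InnerProductSpace ComplexConjugate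
open ContinuousLinearMap
set_option linter.unusedSectionVars false
set_option maxHeartbeats 1000000

namespace Fermion

variable (L : Type) [Fintype L] [LinearOrder L]

/-- The fermionic Fock space over the one-particle space `h = ℓ²(L)`, realized concretely
via its orthonormal basis indexed by the finite subsets of `L` (the vectors `f_M`). -/
abbrev FockSpace := EuclideanSpace ℂ (Finset L)

variable {L}

/-- The vacuum vector `Ψ = f_∅`. -/
def vac : FockSpace L := EuclideanSpace.single ∅ 1

/-- Jordan–Wigner sign factor. -/
def jwSign (l : L) (S : Finset L) : ℂ := (-1 : ℂ) ^ (S.filter (fun k => k < l)).card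

/-- The creation operator `a*_l = a*(e_l)`. -/
def cre (l : L) : FockSpace L →L[ℂ] FockSpace L :=
  LinearMap.toContinuousLinearMap <|
    (EuclideanSpace.basisFun (Finset L) ℂ).toBasis.constr ℂ fun S =>
      if l ∈ S then 0 else jwSign l S • EuclideanSpace.single (insert l S) 1

/-- The annihilation operator `a_l = a(e_l)`. -/
def ann (l : L) : FockSpace L →L[ℂ] FockSpace L := ContinuousLinearMap.adjoint (cre l)

/-- The vector `f_{(l_1,…,l_n)} = a*_{l_1} ⋯ a*_{l_n} Ψ  (= P (e_{l_1} ⊗ ⋯ ⊗ e_{l_n}))`. -/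
def fvec (M : List L) : FockSpace L := M.foldr (fun l v => cre l v) vac

/-- The algebra `A(I)` : the unital *-subalgebra of `B(H)` generated by `{a_l : l ∈ I}`. -/
def A (I : Finset L) : StarSubalgebra ℂ (FockSpace L →L[ℂ] FockSpace L) :=
  StarAlgebra.adjoin ℂ (ann '' (I : Set L))

/-- The trace on `B(H)`. -/
def Tr (T : FockSpace L →L[ℂ] FockSpace L) : ℂ := LinearMap.trace ℂ (FockSpace L) T

/-- The rank-one operator `|x⟩⟨y|`. -/
def ketbra (x y : FockSpace L) : FockSpace L →L[ℂ] FockSpace L :=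
  (ContinuousLinearMap.toSpanSingleton ℂ x).comp (innerSL ℂ y)

/-- A valid choice of `D_I`: `D S` enumerates the finite set `S` without repetitions. -/
def IsEnum (D : Finset L → List L) : Prop := ∀ S : Finset L, (D S).Nodup ∧ (D S).toFinset = S

/-- The entangled vector `Φ = Σ_{M ∈ D_I} p_M^{1/2} f_{M ι(M)}`. -/
def Phi (D : Finset L → List L) (p : Finset L → ℝ) (I : Finset L) (ι : L → L) : FockSpace L :=
  ∑ S ∈ I.powerset, (Real.sqrt (p S) : ℂ) • fvec (D S ++ (D S).map ι)

/-- The state `φ(x) = ⟨Φ, xΦ⟩`. -/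
def phi (D : Finset L → List L) (p : Finset L → ℝ) (I : Finset L) (ι : L → L)
    (x : FockSpace L →L[ℂ] FockSpace L) : ℂ :=
  ⟪Phi D p I ι, x (Phi D p I ι)⟫_ℂ

-- basis vectors
def ev (S : Finset L) : FockSpace L := EuclideanSpace.single S 1

lemma ev_apply (S T : Finset L) : ev S T = if T = S then 1 else 0 :=
  EuclideanSpace.single_apply S 1 T

lemma inner_ev_left (S : Finset L) (v : FockSpace L) : ⟪ev S, v⟫_ℂ = v S := by
  simp [ev, EuclideanSpace.inner_single_left]

lemma sum_ev (v : FockSpace L) : ∑ U : Finset L, v U • ev U = v := by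
  ext T
  calc (∑ U : Finset L, v U • ev U) T
      = EuclideanSpace.proj (𝕜 := ℂ) T (∑ U : Finset L, v U • ev U) := rfl
    _ = ∑ U : Finset L, EuclideanSpace.proj (𝕜 := ℂ) T (v U • ev U) :=
        map_sum _ _ _
    _ = ∑ U : Finset L, v U * ev U T := by
        simp [smul_eq_mul]
    _ = v T := by simp [ev_apply]

lemma clm_ext_basis {T₁ T₂ : FockSpace L →L[ℂ] FockSpace L}
    (h : ∀ S : Finset L, T₁ (ev S) = T₂ (ev S)) : T₁ = T₂ := by
  ext v
  rw [← sum_ev v, map_sum, map_sum]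
  simp only [map_smul, h]

lemma cre_single (l : L) (S : Finset L) :
    cre l (ev S) = if l ∈ S then 0 else jwSign l S • ev (insert l S) := by
  have hb : (EuclideanSpace.basisFun (Finset L) ℂ).toBasis S = ev S := by
    simp [ev, EuclideanSpace.basisFun_apply]
  rw [show cre l (ev S)
      = ((EuclideanSpace.basisFun (Finset L) ℂ).toBasis.constr ℂ fun S =>
        if l ∈ S then 0 else jwSign l S • EuclideanSpace.single (insert l S) 1)
        ((EuclideanSpace.basisFun (Finset L) ℂ).toBasis S) from by rw [hb]; rfl]
  rw [Module.Basis.constr_basis]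
  rfl


/-! ### sign lemmas -/

lemma jwSign_mul_self (l : L) (S : Finset L) : jwSign l S * jwSign l S = 1 := by
  simp [jwSign, ← pow_add, ← two_mul, pow_mul]

lemma jwSign_conj (l : L) (S : Finset L) : conj (jwSign l S) = jwSign l S := by
  simp [jwSign, map_pow]

def jw (X T : Finset L) : ℂ := ∏ x ∈ X, jwSign x T

lemma jw_mul_self (X T : Finset L) : jw X T * jw X T = 1 := by
  rw [jw, ← Finset.prod_mul_distrib]
  exact Finset.prod_eq_one fun x _ => jwSign_mul_self x T

lemma jw_conj (X T : Finset L) : conj (jw X T) = jw X T := by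
  rw [jw, map_prod]
  exact Finset.prod_congr rfl fun x _ => jwSign_conj x T

lemma jw_empty (X : Finset L) : jw X ∅ = 1 := by
  simp [jw, jwSign]

lemma jw_insert_left (x : L) (X T : Finset L) (hx : x ∉ X) :
    jw (insert x X) T = jwSign x T * jw X T := by
  rw [jw, Finset.prod_insert hx]; rfl

lemma jwSign_union (l : L) (X T : Finset L) (h : Disjoint X T) :
    jwSign l (X ∪ T) = jwSign l X * jwSign l T := by
  rw [jwSign, jwSign, jwSign, Finset.filter_union, ← pow_add,
    Finset.card_union_of_disjoint (Finset.disjoint_filter_filter h)]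

/-- the "greater" sign -/
def gs (l : L) (X : Finset L) : ℂ := (-1 : ℂ) ^ (X.filter (fun k => l < k)).card

lemma pow_filter_card (P : L → Prop) [DecidablePred P] (X : Finset L) :
    ((-1 : ℂ)) ^ (X.filter P).card = ∏ x ∈ X, (if P x then (-1:ℂ) else 1) := by
  rw [Finset.prod_ite, Finset.prod_const, Finset.prod_const, one_pow, mul_one]

lemma jwSign_insert (x l : L) (T : Finset L) (hl : l ∉ T) :
    jwSign x (insert l T) = (if l < x then (-1:ℂ) else 1) * jwSign x T := by
  rw [jwSign, jwSign, Finset.filter_insert]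
  by_cases h : l < x
  · rw [if_pos h, if_pos h, Finset.card_insert_of_notMem (by simp [hl]), pow_succ]
    ring
  · rw [if_neg h, if_neg h, one_mul]

lemma jw_insert_right (l : L) (X T : Finset L) (hl : l ∉ T) :
    jw X (insert l T) = gs l X * jw X T := by
  rw [jw, jw, gs, pow_filter_card, ← Finset.prod_mul_distrib]
  exact Finset.prod_congr rfl fun x _ => jwSign_insert x l T hl

lemma jwSign_mul_gs (l : L) (X : Finset L) (hl : l ∉ X) :
    jwSign l X * gs l X = (-1 : ℂ) ^ X.card := by
  rw [jwSign, gs, pow_filter_card, pow_filter_card, ← Finset.prod_mul_distrib,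
    ← Finset.prod_const]
  refine Finset.prod_congr rfl fun x hx => ?_
  have hxl : x ≠ l := fun h => hl (h ▸ hx)
  rcases lt_or_gt_of_ne hxl with h | h
  · simp [h, not_lt_of_gt h]
  · simp [h, not_lt_of_gt h]


/-! ### operator constructors and adjoints -/

def mk (f : Finset L → FockSpace L) : FockSpace L →L[ℂ] FockSpace L :=
  LinearMap.toContinuousLinearMap <|
    (EuclideanSpace.basisFun (Finset L) ℂ).toBasis.constr ℂ f

lemma mk_single (f : Finset L → FockSpace L) (S : Finset L) : mk f (ev S) = f S := by
  have hb : (EuclideanSpace.basisFun (Finset L) ℂ).toBasis S = ev S := by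
    simp [ev, EuclideanSpace.basisFun_apply]
  rw [show mk f (ev S)
      = ((EuclideanSpace.basisFun (Finset L) ℂ).toBasis.constr ℂ f)
        ((EuclideanSpace.basisFun (Finset L) ℂ).toBasis S) from by rw [hb]; rfl]
  rw [Module.Basis.constr_basis]

lemma inner_ev_right (S : Finset L) (v : FockSpace L) : ⟪v, ev S⟫_ℂ = conj (v S) := by
  simp [ev, EuclideanSpace.inner_single_right]

lemma inner_ev_ev (S T : Finset L) : ⟪ev S, ev T⟫_ℂ = if S = T then 1 else 0 := by
  rw [inner_ev_left, ev_apply]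

lemma adjoint_eq_of {T₁ T₂ : FockSpace L →L[ℂ] FockSpace L}
    (h : ∀ U T : Finset L, ⟪T₁ (ev T), ev U⟫_ℂ = ⟪ev T, T₂ (ev U)⟫_ℂ) :
    ContinuousLinearMap.adjoint T₁ = T₂ := by
  refine clm_ext_basis fun U => ?_
  ext T
  rw [show (ContinuousLinearMap.adjoint T₁) (ev U) T
      = ⟪ev T, (ContinuousLinearMap.adjoint T₁) (ev U)⟫_ℂ from (inner_ev_left T _).symm,
    show T₂ (ev U) T = ⟪ev T, T₂ (ev U)⟫_ℂ from (inner_ev_left T _).symm,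
    ContinuousLinearMap.adjoint_inner_right, h]

/-- explicit annihilation -/
lemma ann_single (l : L) (U : Finset L) :
    ann l (ev U) = if l ∈ U then jwSign l (U.erase l) • ev (U.erase l) else 0 := by
  have : ContinuousLinearMap.adjoint (cre l)
      = mk (fun U => if l ∈ U then jwSign l (U.erase l) • ev (U.erase l) else 0) := by
    refine adjoint_eq_of fun U T => ?_
    rw [cre_single, mk_single]
    by_cases hT : l ∈ T
    · rw [if_pos hT]
      by_cases hU : l ∈ U
      · rw [if_pos hU, inner_zero_left, inner_smul_right, inner_ev_ev,
          if_neg (fun h : T = U.erase l => absurd (h ▸ hT) (Finset.notMem_erase l U))]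
        ring
      · rw [if_neg hU, inner_zero_left, inner_zero_right]
    · rw [if_neg hT, inner_smul_left, inner_ev_ev, jwSign_conj]
      by_cases hU : l ∈ U
      · rw [if_pos hU, inner_smul_right, inner_ev_ev]
        by_cases h1 : insert l T = U
        · have h2 : T = U.erase l := by rw [← h1, Finset.erase_insert hT]
          rw [if_pos h1, if_pos h2, h2]
        · have h2 : ¬ T = U.erase l := fun h => h1 (by rw [h, Finset.insert_erase hU])
          rw [if_neg h1, if_neg h2]
          ring
      · rw [if_neg hU, inner_zero_right,
          if_neg (fun h : insert l T = U => hU (h ▸ Finset.mem_insert_self l T))]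
        ring
  rw [ann, this, mk_single]


/-! ### the partial isometries W, Wd and parity G -/

def W (X : Finset L) : FockSpace L →L[ℂ] FockSpace L :=
  mk (fun T => if Disjoint X T then jw X T • ev (X ∪ T) else 0)

def Wd (X : Finset L) : FockSpace L →L[ℂ] FockSpace L :=
  mk (fun U => if X ⊆ U then jw X (U \ X) • ev (U \ X) else 0)

def G : FockSpace L →L[ℂ] FockSpace L :=
  mk (fun T => ((-1 : ℂ) ^ T.card) • ev T)

lemma W_single (X T : Finset L) :
    W X (ev T) = if Disjoint X T then jw X T • ev (X ∪ T) else 0 := mk_single _ _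

lemma Wd_single (X U : Finset L) :
    Wd X (ev U) = if X ⊆ U then jw X (U \ X) • ev (U \ X) else 0 := mk_single _ _

lemma G_single (T : Finset L) : G (ev T) = ((-1 : ℂ) ^ T.card) • ev T := mk_single _ _

lemma adjoint_W (X : Finset L) : ContinuousLinearMap.adjoint (W X) = Wd X := by
  refine adjoint_eq_of fun U T => ?_
  rw [W_single, Wd_single]
  by_cases h1 : Disjoint X T
  · rw [if_pos h1, inner_smul_left, inner_ev_ev, jw_conj]
    by_cases h2 : X ∪ T = U
    · have h3 : X ⊆ U := h2 ▸ Finset.subset_union_left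
      have h4 : U \ X = T := by rw [← h2, Finset.union_sdiff_cancel_left h1]
      rw [if_pos h2, if_pos h3, inner_smul_right, inner_ev_ev, if_pos h4.symm, h4]
    · rw [if_neg h2]
      by_cases h3 : X ⊆ U
      · rw [if_pos h3, inner_smul_right, inner_ev_ev,
          if_neg (fun h : T = U \ X => h2 (by rw [h, Finset.union_sdiff_of_subset h3]))]
        ring
      · rw [if_neg h3, inner_zero_right]
        ring
  · rw [if_neg h1, inner_zero_left]
    by_cases h3 : X ⊆ U
    · rw [if_pos h3, inner_smul_right, inner_ev_ev,
        if_neg (fun h : T = U \ X => h1 (h ▸ Finset.disjoint_sdiff))]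
      ring
    · rw [if_neg h3, inner_zero_right]

lemma adjoint_Wd (X : Finset L) : ContinuousLinearMap.adjoint (Wd X) = W X := by
  rw [← adjoint_W, ContinuousLinearMap.adjoint_adjoint]

lemma star_W (X : Finset L) : star (W X) = Wd X := by
  rw [ContinuousLinearMap.star_eq_adjoint, adjoint_W]

lemma star_Wd (X : Finset L) : star (Wd X) = W X := by
  rw [ContinuousLinearMap.star_eq_adjoint, adjoint_Wd]

lemma adjoint_G : ContinuousLinearMap.adjoint (G : FockSpace L →L[ℂ] FockSpace L) = G := by
  refine adjoint_eq_of fun U T => ?_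
  rw [G_single, G_single, inner_smul_left, inner_smul_right, inner_ev_ev]
  by_cases h : T = U
  · subst h; simp [map_pow]
  · rw [if_neg h]; ring

lemma star_G : star (G : FockSpace L →L[ℂ] FockSpace L) = G := by
  rw [ContinuousLinearMap.star_eq_adjoint, adjoint_G]

lemma G_mul_G : (G : FockSpace L →L[ℂ] FockSpace L) * G = 1 := by
  refine clm_ext_basis fun S => ?_
  rw [ContinuousLinearMap.mul_apply, G_single, map_smul, G_single, smul_smul,
    ← pow_add, ← two_mul, pow_mul]
  simp


/-! ### commutation relations -/

lemma gs_mul_self (l : L) (X : Finset L) : gs l X * gs l X = 1 := by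
  simp [gs, ← pow_add, ← two_mul, pow_mul]

lemma conj_eps (n : ℕ) : conj ((-1 : ℂ) ^ n) = (-1 : ℂ) ^ n := by
  simp [map_pow]

lemma cre_W (l : L) (X : Finset L) (hl : l ∉ X) :
    cre l * W X = ((-1 : ℂ) ^ X.card) • (W X * cre l) := by
  refine clm_ext_basis fun T => ?_
  rw [ContinuousLinearMap.mul_apply, ContinuousLinearMap.smul_apply,
    ContinuousLinearMap.mul_apply, W_single, cre_single]
  by_cases h1 : Disjoint X T
  · rw [if_pos h1, map_smul, cre_single]
    by_cases h2 : l ∈ T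
    · rw [if_pos (Finset.mem_union_right X h2), if_pos h2]
      simp
    · have hXT : l ∉ X ∪ T := by simp [hl, h2]
      have hd : Disjoint X (insert l T) := by
        rw [Finset.disjoint_insert_right]; exact ⟨hl, h1⟩
      rw [if_neg hXT, if_neg h2, map_smul, W_single, if_pos hd,
        Finset.union_insert, smul_smul, smul_smul, smul_smul,
        jwSign_union l X T h1, jw_insert_right l X T h2]
      congr 1
      have hgs := gs_mul_self l X
      have heps := jwSign_mul_gs l X hl
      linear_combination (jw X T * jwSign l T * gs l X) * heps - (jw X T * jwSign l T * jwSign l X) * hgs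
  · rw [if_neg h1, map_zero]
    by_cases h2 : l ∈ T
    · rw [if_pos h2]
      simp
    · have hd : ¬ Disjoint X (insert l T) := fun h =>
        h1 (h.mono_right (Finset.subset_insert l T))
      rw [if_neg h2, map_smul, W_single, if_neg hd]
      simp

lemma Wd_cre (l : L) (X : Finset L) (hl : l ∉ X) :
    Wd X * cre l = ((-1 : ℂ) ^ X.card) • (cre l * Wd X) := by
  refine clm_ext_basis fun U => ?_
  rw [ContinuousLinearMap.mul_apply, ContinuousLinearMap.smul_apply,
    ContinuousLinearMap.mul_apply, cre_single, Wd_single]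
  by_cases h2 : l ∈ U
  · rw [if_pos h2]
    by_cases h3 : X ⊆ U
    · rw [if_pos h3, map_zero, map_smul, cre_single,
        if_pos (Finset.mem_sdiff.mpr ⟨h2, hl⟩)]
      simp
    · rw [if_neg h3, map_zero]
      simp
  · rw [if_neg h2, map_smul, Wd_single]
    by_cases h3 : X ⊆ U
    · have h4 : X ⊆ insert l U := h3.trans (Finset.subset_insert l U)
      have h5 : insert l U \ X = insert l (U \ X) := by
        rw [Finset.insert_sdiff_of_notMem _ hl]
      have h6 : l ∉ U \ X := fun h => h2 (Finset.mem_sdiff.mp h).1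
      rw [if_pos h4, if_pos h3, map_smul, cre_single, if_neg h6, h5,
        smul_smul, smul_smul, smul_smul, jw_insert_right l X (U \ X) h6]
      have hU : X ∪ (U \ X) = U := Finset.union_sdiff_of_subset h3
      have h7 : jwSign l U = jwSign l X * jwSign l (U \ X) := by
        rw [← hU, jwSign_union l X (U \ X) Finset.disjoint_sdiff, hU]
      rw [h7, ← jwSign_mul_gs l X hl]
      congr 1
      ring
    · have h4 : ¬ X ⊆ insert l U := fun h => h3 (fun x hx =>
        (Finset.mem_insert.mp (h hx)).elim (fun he => absurd (he ▸ hx) hl) id)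
      rw [if_neg h4, if_neg h3, map_zero]
      simp

lemma star_eps (n : ℕ) : star ((-1 : ℂ) ^ n) = (-1 : ℂ) ^ n := by
  rw [star_pow, star_neg, star_one]

lemma cre_G (l : L) : cre l * G = -(G * cre l) := by
  refine clm_ext_basis fun T => ?_
  rw [ContinuousLinearMap.mul_apply, ContinuousLinearMap.neg_apply,
    ContinuousLinearMap.mul_apply, G_single, map_smul, cre_single]
  by_cases h : l ∈ T
  · rw [if_pos h]
    simp
  · rw [if_neg h, map_smul, G_single, Finset.card_insert_of_notMem h, pow_succ]
    rw [smul_smul, smul_smul, ← neg_smul]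
    congr 1
    ring

lemma star_cre (l : L) : star (cre l) = ann l := by
  rw [ContinuousLinearMap.star_eq_adjoint]; rfl

lemma star_ann (l : L) : star (ann l) = cre l := by
  rw [ContinuousLinearMap.star_eq_adjoint, ann, ContinuousLinearMap.adjoint_adjoint]

lemma ann_W (l : L) (X : Finset L) (hl : l ∉ X) :
    ann l * W X = ((-1 : ℂ) ^ X.card) • (W X * ann l) := by
  have h := congrArg star (Wd_cre l X hl)
  rwa [star_mul, star_cre, star_Wd, star_smul, star_mul, star_cre, star_Wd,
    star_eps] at h

lemma Wd_ann (l : L) (X : Finset L) (hl : l ∉ X) :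
    Wd X * ann l = ((-1 : ℂ) ^ X.card) • (ann l * Wd X) := by
  have h := congrArg star (cre_W l X hl)
  rwa [star_mul, star_cre, star_W, star_smul, star_mul, star_cre, star_W,
    star_eps] at h

lemma G_ann (l : L) : ann l * G = -(G * ann l) := by
  refine clm_ext_basis fun T => ?_
  rw [ContinuousLinearMap.mul_apply, ContinuousLinearMap.neg_apply,
    ContinuousLinearMap.mul_apply, G_single, map_smul, ann_single]
  by_cases h : l ∈ T
  · rw [if_pos h, map_smul, G_single, smul_smul, smul_smul, ← neg_smul]
    congr 1
    rw [← Finset.card_erase_add_one h, pow_succ]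
    ring
  · rw [if_neg h]
    simp


/-! ### the twist Gx and the invariant subspace Sub -/

def Gx (X : Finset L) : FockSpace L →L[ℂ] FockSpace L := if Even X.card then 1 else G

lemma Gx_mul_Gx (X : Finset L) : Gx X * Gx X = 1 := by
  rw [Gx]; split_ifs with h
  · rw [one_mul]
  · exact G_mul_G

lemma star_Gx (X : Finset L) : star (Gx X) = Gx X := by
  rw [Gx]; split_ifs with h
  · exact star_one _
  · exact star_G

lemma Gx_ann (X : Finset L) (l : L) :
    Gx X * ann l * Gx X = ((-1 : ℂ) ^ X.card) • ann l := by
  rw [Gx]; split_ifs with h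
  · rw [one_mul, mul_one, h.neg_one_pow, one_smul]
  · have h2 : G * ann l * G = -(ann l * (G * G)) := by
      have h3 : G * ann l = -(ann l * G) := by rw [← neg_neg (G * ann l), ← G_ann l]
      rw [h3]; ext v; rfl
    rw [h2, G_mul_G, mul_one, (Nat.not_even_iff_odd.mp h).neg_one_pow]
    rw [neg_smul (1:ℂ) (ann l), one_smul]

lemma Gx_single (X V : Finset L) :
    Gx X (ev V) = (if Even X.card then (1:ℂ) else (-1 : ℂ) ^ V.card) • ev V := by
  rw [Gx]; split_ifs with h
  · rw [ContinuousLinearMap.one_apply, one_smul]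
  · exact G_single V

def Sub (J : Finset L) : Submodule ℂ (FockSpace L) where
  carrier := {v | ∀ U : Finset L, ¬ U ⊆ J → v U = 0}
  add_mem' := by
    intro a b ha hb U hU
    have : (a + b) U = a U + b U := rfl
    rw [this, ha U hU, hb U hU, add_zero]
  zero_mem' := by intro U hU; rfl
  smul_mem' := by
    intro c v hv U hU
    have : (c • v) U = c * v U := rfl
    rw [this, hv U hU, mul_zero]

lemma mem_Sub {J : Finset L} {v : FockSpace L} :
    v ∈ Sub J ↔ ∀ U : Finset L, ¬ U ⊆ J → v U = 0 := Iff.rfl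

lemma ev_mem_Sub {J V : Finset L} (hV : V ⊆ J) : ev V ∈ Sub J := by
  intro U hU
  rw [ev_apply, if_neg (fun h : U = V => hU (h ▸ hV))]

lemma apply_mem_Sub {J : Finset L} (T : FockSpace L →L[ℂ] FockSpace L)
    (h : ∀ V : Finset L, V ⊆ J → T (ev V) ∈ Sub J) :
    ∀ v ∈ Sub J, T v ∈ Sub J := by
  intro v hv
  rw [← sum_ev v, map_sum]
  refine Submodule.sum_mem _ fun V _ => ?_
  rw [map_smul]
  by_cases hV : V ⊆ J
  · exact Submodule.smul_mem _ _ (h V hV)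
  · rw [hv V hV, zero_smul]
    exact Submodule.zero_mem _

lemma ann_mem_Sub {J : Finset L} (l : L) : ∀ v ∈ Sub J, ann l v ∈ Sub J := by
  refine apply_mem_Sub _ fun V hV => ?_
  rw [ann_single]
  split_ifs with h
  · exact Submodule.smul_mem _ _ (ev_mem_Sub ((Finset.erase_subset l V).trans hV))
  · exact Submodule.zero_mem _

lemma cre_mem_Sub {J : Finset L} (l : L) (hl : l ∈ J) : ∀ v ∈ Sub J, cre l v ∈ Sub J := by
  refine apply_mem_Sub _ fun V hV => ?_
  rw [cre_single]
  split_ifs with h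
  · exact Submodule.zero_mem _
  · exact Submodule.smul_mem _ _ (ev_mem_Sub (Finset.insert_subset hl hV))

lemma G_mem_Sub {J : Finset L} : ∀ v ∈ Sub J, G v ∈ Sub J := by
  refine apply_mem_Sub _ fun V hV => ?_
  rw [G_single]
  exact Submodule.smul_mem _ _ (ev_mem_Sub hV)

lemma Gx_mem_Sub {J X : Finset L} : ∀ v ∈ Sub J, Gx X v ∈ Sub J := by
  rw [Gx]; split_ifs with h
  · intro v hv; rwa [ContinuousLinearMap.one_apply]
  · exact G_mem_Sub


lemma mem_A_sub {J : Finset L} {b : FockSpace L →L[ℂ] FockSpace L} (hb : b ∈ A J) :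
    (∀ v ∈ Sub J, b v ∈ Sub J) ∧ (∀ v ∈ Sub J, (star b) v ∈ Sub J) := by
  induction hb using StarAlgebra.adjoin_induction with
  | mem x hx =>
      obtain ⟨l, hl, rfl⟩ := hx
      refine ⟨ann_mem_Sub l, ?_⟩
      rw [star_ann]
      exact cre_mem_Sub l (Finset.mem_coe.mp hl)
  | algebraMap r =>
      constructor <;> intro v hv
      · rw [Algebra.algebraMap_eq_smul_one, ContinuousLinearMap.smul_apply,
          ContinuousLinearMap.one_apply]
        exact Submodule.smul_mem _ _ hv
      · rw [Algebra.algebraMap_eq_smul_one, star_smul, star_one,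
          ContinuousLinearMap.smul_apply, ContinuousLinearMap.one_apply]
        exact Submodule.smul_mem _ _ hv
  | add x y hx hy ihx ihy =>
      constructor <;> intro v hv
      · rw [ContinuousLinearMap.add_apply]
        exact Submodule.add_mem _ (ihx.1 v hv) (ihy.1 v hv)
      · erw [star_add, ContinuousLinearMap.add_apply]
        exact Submodule.add_mem _ (ihx.2 v hv) (ihy.2 v hv)
  | mul x y hx hy ihx ihy =>
      constructor <;> intro v hv
      · rw [ContinuousLinearMap.mul_apply]
        exact ihx.1 _ (ihy.1 v hv)
      · rw [star_mul, ContinuousLinearMap.mul_apply]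
        exact ihy.2 _ (ihx.2 v hv)
  | star x hx ih =>
      refine ⟨ih.2, ?_⟩
      rw [star_star]
      exact ih.1

lemma conjGx_mul (X : Finset L) (x y : FockSpace L →L[ℂ] FockSpace L) :
    (Gx X * x * Gx X) * (Gx X * y * Gx X) = Gx X * (x * y) * Gx X := by
  have h := Gx_mul_Gx X
  calc (Gx X * x * Gx X) * (Gx X * y * Gx X)
      = Gx X * (x * ((Gx X * Gx X) * (y * Gx X))) := by simp only [mul_assoc]
    _ = Gx X * (x * y) * Gx X := by rw [h, one_mul]; simp only [mul_assoc]

lemma mem_A_comm {J X : Finset L} (hXJ : ∀ l ∈ J, l ∉ X)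
    {b : FockSpace L →L[ℂ] FockSpace L} (hb : b ∈ A J) :
    b * W X = W X * (Gx X * b * Gx X) ∧ Wd X * b = (Gx X * b * Gx X) * Wd X := by
  induction hb using StarAlgebra.adjoin_induction with
  | mem x hx =>
      obtain ⟨l, hl, rfl⟩ := hx
      have hlX : l ∉ X := hXJ l (Finset.mem_coe.mp hl)
      constructor
      · rw [Gx_ann, mul_smul_comm, ann_W l X hlX]
      · rw [Gx_ann, smul_mul_assoc, Wd_ann l X hlX]
  | algebraMap r =>
      have h1 : Gx X * ((algebraMap ℂ _ r : FockSpace L →L[ℂ] FockSpace L)) * Gx X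
          = algebraMap ℂ _ r := by
        rw [Algebra.algebraMap_eq_smul_one, mul_smul_comm, mul_one, smul_mul_assoc, Gx_mul_Gx]
      rw [h1]
      constructor
      · rw [Algebra.algebraMap_eq_smul_one, smul_mul_assoc, mul_smul_comm, one_mul, mul_one]
      · rw [Algebra.algebraMap_eq_smul_one, smul_mul_assoc, mul_smul_comm, one_mul, mul_one]
  | add x y hx hy ihx ihy =>
      constructor
      · simp only [add_mul, mul_add, ihx.1, ihy.1]
      · simp only [add_mul, mul_add, ihx.2, ihy.2]
  | mul x y hx hy ihx ihy =>
      constructor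
      · calc x * y * W X = x * (y * W X) := mul_assoc _ _ _
          _ = x * (W X * (Gx X * y * Gx X)) := by rw [ihy.1]
          _ = (x * W X) * (Gx X * y * Gx X) := (mul_assoc _ _ _).symm
          _ = (W X * (Gx X * x * Gx X)) * (Gx X * y * Gx X) := by rw [ihx.1]
          _ = W X * ((Gx X * x * Gx X) * (Gx X * y * Gx X)) := mul_assoc _ _ _
          _ = W X * (Gx X * (x * y) * Gx X) := by rw [conjGx_mul]
      · calc Wd X * (x * y) = (Wd X * x) * y := (mul_assoc _ _ _).symm
          _ = ((Gx X * x * Gx X) * Wd X) * y := by rw [ihx.2]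
          _ = (Gx X * x * Gx X) * (Wd X * y) := mul_assoc _ _ _
          _ = (Gx X * x * Gx X) * ((Gx X * y * Gx X) * Wd X) := by rw [ihy.2]
          _ = ((Gx X * x * Gx X) * (Gx X * y * Gx X)) * Wd X := (mul_assoc _ _ _).symm
          _ = (Gx X * (x * y) * Gx X) * Wd X := by rw [conjGx_mul]
  | star x hx ih =>
      have h1 := congrArg star ih.2
      have h2 := congrArg star ih.1
      simp only [star_mul, star_Wd, star_W, star_Gx] at h1 h2
      constructor
      · simp only [mul_assoc] at h1 ⊢
        exact h1
      · simp only [mul_assoc] at h2 ⊢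
        exact h2


/-! ### fvec structure -/

lemma coord_sum {α : Type*} (s : Finset α) (f : α → FockSpace L) (U : Finset L) :
    (∑ V ∈ s, f V) U = ∑ V ∈ s, f V U := by
  calc (∑ V ∈ s, f V) U = EuclideanSpace.proj (𝕜 := ℂ) U (∑ V ∈ s, f V) := rfl
    _ = _ := by rw [map_sum]; rfl

lemma coord_smul (c : ℂ) (v : FockSpace L) (U : Finset L) : (c • v) U = c * v U := rfl

lemma conj_of_sq {c : ℂ} (hc : c * c = 1) : conj c = c := by
  rcases mul_self_eq_one_iff.mp hc with h | h <;> simp [h]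

lemma foldr_cre_smul (M : List L) (a : ℂ) (v : FockSpace L) :
    M.foldr (fun l v => cre l v) (a • v) = a • M.foldr (fun l v => cre l v) v := by
  induction M with
  | nil => rfl
  | cons l M ih => rw [List.foldr_cons, List.foldr_cons, ih, map_smul]

lemma foldr_cre (M : List L) (hM : M.Nodup) :
    ∃ c : ℂ, c * c = 1 ∧ ∀ T : Finset L, Disjoint M.toFinset T →
      M.foldr (fun l v => cre l v) (ev T)
        = (c * jw M.toFinset T) • ev (M.toFinset ∪ T) := by
  induction M with
  | nil =>
      refine ⟨1, one_mul 1, fun T _ => ?_⟩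
      simp [jw]
  | cons l M ih =>
      have hlM : l ∉ M := (List.nodup_cons.mp hM).1
      obtain ⟨c, hc, hc2⟩ := ih (List.nodup_cons.mp hM).2
      have hlX : l ∉ M.toFinset := fun h => hlM (List.mem_toFinset.mp h)
      refine ⟨c * jwSign l M.toFinset, ?_, fun T hT => ?_⟩
      · rw [mul_mul_mul_comm, hc, jwSign_mul_self, one_mul]
      · rw [List.toFinset_cons] at hT ⊢
        have hd : Disjoint M.toFinset T := hT.mono_left (Finset.subset_insert l _)
        have hlT : l ∉ T := Finset.disjoint_insert_left.mp hT |>.1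
        have hlXT : l ∉ M.toFinset ∪ T := by simp [hlX, hlT]
        rw [List.foldr_cons, hc2 T hd, map_smul, cre_single, if_neg hlXT,
          Finset.insert_union, smul_smul, jw_insert_left l M.toFinset T hlX,
          jwSign_union l M.toFinset T hd]
        congr 1
        ring


lemma fvec_eq (M : List L) (hM : M.Nodup) :
    ∃ c : ℂ, c * c = 1 ∧ fvec M = c • ev M.toFinset := by
  obtain ⟨c, hc, h⟩ := foldr_cre M hM
  refine ⟨c, hc, ?_⟩
  rw [fvec, show (vac : FockSpace L) = ev ∅ from rfl, h ∅ (Finset.disjoint_empty_right _),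
    Finset.union_empty, jw_empty, mul_one]

lemma fvec_pair {S V : Finset L} {M N : List L} (hM : M.Nodup) (hMS : M.toFinset = S)
    (hN : N.Nodup) (hNV : N.toFinset = V) (hdisj : Disjoint S V) :
    ∃ c c' : ℂ, c * c = 1 ∧ c' * c' = 1 ∧ fvec N = c' • ev V ∧
      fvec (M ++ N) = c • W S (fvec N) := by
  subst hMS; subst hNV
  obtain ⟨c, hc, hcall⟩ := foldr_cre M hM
  obtain ⟨c', hc', hN'⟩ := fvec_eq N hN
  refine ⟨c, c', hc, hc', hN', ?_⟩
  rw [fvec, List.foldr_append, ← fvec, hN', foldr_cre_smul, hcall N.toFinset hdisj,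
    map_smul, W_single, if_pos hdisj, smul_smul, smul_smul, smul_smul]
  congr 1
  ring

lemma G_coord (w : FockSpace L) (U : Finset L) : G w U = (-1 : ℂ) ^ U.card * w U := by
  have h : G w = ∑ V : Finset L, (w V * (-1 : ℂ) ^ V.card) • ev V := by
    conv_lhs => rw [← sum_ev w]
    rw [map_sum]
    exact Finset.sum_congr rfl fun V _ => by rw [map_smul, G_single, smul_smul]
  rw [h, coord_sum]
  simp only [coord_smul, ev_apply, mul_ite, mul_one, mul_zero]
  rw [Finset.sum_ite_eq, if_pos (Finset.mem_univ U)]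
  ring

lemma Gx_coord (X : Finset L) (w : FockSpace L) (U : Finset L) :
    Gx X w U = (if Even X.card then (1:ℂ) else (-1 : ℂ) ^ U.card) * w U := by
  rw [Gx]; split_ifs with h
  · rw [ContinuousLinearMap.one_apply, one_mul]
  · exact G_coord w U

lemma WdW_self {J S : Finset L} (hS : Disjoint S J) :
    ∀ v ∈ Sub J, Wd S (W S v) = v := by
  intro v hv
  conv_lhs => rw [← sum_ev v]
  conv_rhs => rw [← sum_ev v]
  rw [map_sum, map_sum]
  refine Finset.sum_congr rfl fun V _ => ?_
  by_cases hV : V ⊆ J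
  · have hdisj : Disjoint S V := hS.mono_right hV
    rw [map_smul, map_smul, W_single, if_pos hdisj, map_smul, Wd_single,
      if_pos Finset.subset_union_left, Finset.union_sdiff_cancel_left hdisj,
      smul_smul, smul_smul, mul_assoc (v V) (jw S V) (jw S V), jw_mul_self, mul_one]
  · rw [hv V hV, zero_smul, map_zero, map_zero]

lemma WdW_ne {J S T : Finset L} (hS : Disjoint S J) (hT : Disjoint T J) (hST : S ≠ T)
    {U : Finset L} (hU : U ⊆ J) :
    ∀ v ∈ Sub J, (Wd S (W T v)) U = 0 := by
  intro v hv
  conv_lhs => rw [← sum_ev v]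
  rw [map_sum, map_sum, coord_sum]
  refine Finset.sum_eq_zero fun V _ => ?_
  by_cases hV : V ⊆ J
  · have hdisj : Disjoint T V := hT.mono_right hV
    rw [map_smul, map_smul, W_single, if_pos hdisj, map_smul, Wd_single]
    by_cases hSTV : S ⊆ T ∪ V
    · rw [if_pos hSTV]
      have hne : U ≠ (T ∪ V) \ S := by
        intro he
        apply hST
        have hSV : Disjoint S V := hS.mono_right hV
        have h1 : S ⊆ T := fun x hx => by
          rcases Finset.mem_union.mp (hSTV hx) with h | h
          · exact h
          · exact absurd hx (Finset.disjoint_right.mp hSV h)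
        have h2 : T ⊆ S := by
          intro x hx
          by_contra hxS
          have : x ∈ U := he ▸ Finset.mem_sdiff.mpr ⟨Finset.mem_union_left V hx, hxS⟩
          exact Finset.disjoint_left.mp hT hx (hU this)
        exact Finset.Subset.antisymm h1 h2
      rw [coord_smul, coord_smul, coord_smul, ev_apply, if_neg hne]
      ring
    · rw [if_neg hSTV]
      simp
  · rw [hv V hV, zero_smul, map_zero, map_zero]
    rfl


lemma Tr_eq (T : FockSpace L →L[ℂ] FockSpace L) : Tr T = ∑ U : Finset L, (T (ev U)) U := by
  rw [Tr, LinearMap.trace_eq_matrix_trace ℂ (EuclideanSpace.basisFun (Finset L) ℂ).toBasis,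
    Matrix.trace]
  refine Finset.sum_congr rfl fun U _ => ?_
  rw [Matrix.diag_apply, LinearMap.toMatrix_apply]
  simp [OrthonormalBasis.coe_toBasis, EuclideanSpace.basisFun_apply,
    OrthonormalBasis.coe_toBasis_repr_apply, EuclideanSpace.basisFun_repr, ev]

lemma Tr_smul (c : ℂ) (T : FockSpace L →L[ℂ] FockSpace L) : Tr (c • T) = c * Tr T := by
  rw [Tr, Tr, ContinuousLinearMap.coe_smul, map_smul, smul_eq_mul]

lemma Tr_sum {α : Type*} (s : Finset α) (f : α → FockSpace L →L[ℂ] FockSpace L) :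
    Tr (∑ i ∈ s, f i) = ∑ i ∈ s, Tr (f i) := by
  unfold Tr
  rw [ContinuousLinearMap.coe_sum, map_sum]

lemma ketbra_apply (x y z : FockSpace L) : ketbra x y z = ⟪y, z⟫_ℂ • x := rfl

lemma Tr_ketbra_mul (x y : FockSpace L) (b : FockSpace L →L[ℂ] FockSpace L) :
    Tr (ketbra x y * b) = ⟪y, b x⟫_ℂ := by
  rw [Tr_eq]
  rw [Finset.sum_congr rfl fun U (_ : U ∈ Finset.univ) =>
    show ((ketbra x y * b) (ev U)) U = x U * ⟪y, b (ev U)⟫_ℂ from by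
      rw [ContinuousLinearMap.mul_apply, ketbra_apply, coord_smul]; ring]
  conv_rhs => rw [← sum_ev x]
  rw [map_sum, inner_sum]
  refine Finset.sum_congr rfl fun U _ => ?_
  rw [map_smul, inner_smul_right]

lemma toFinset_map (f : L → L) (l : List L) : (l.map f).toFinset = l.toFinset.image f := by
  ext a
  simp [List.mem_toFinset, List.mem_map, Finset.mem_image]

lemma neg_one_pow_sq (n : ℕ) : ((-1 : ℂ) ^ n) * ((-1 : ℂ) ^ n) = 1 := by
  rw [← pow_add, ← two_mul, pow_mul]
  norm_num


lemma key {I : Finset L} {ι : L → L} (hinj : Set.InjOn ι (I : Set L))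
    (hIJ : Disjoint I (I.image ι)) {D : Finset L → List L} (hD : IsEnum D)
    {b : FockSpace L →L[ℂ] FockSpace L} (hb : b ∈ A (I.image ι))
    {S T : Finset L} (hS : S ⊆ I) (hT : T ⊆ I) :
    ⟪fvec (D S ++ (D S).map ι), b (fvec (D T ++ (D T).map ι))⟫_ℂ
      = if S = T then ⟪fvec ((D S).map ι), b (fvec ((D S).map ι))⟫_ℂ else 0 := by
  set J := I.image ι with hJ
  have hSJ : Disjoint S J := Finset.disjoint_of_subset_left hS hIJ
  have hTJ : Disjoint T J := Finset.disjoint_of_subset_left hT hIJ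
  have himgS : S.image ι ⊆ J := hJ ▸ Finset.image_subset_image hS
  have himgT : T.image ι ⊆ J := hJ ▸ Finset.image_subset_image hT
  have hmapnd : ∀ U : Finset L, U ⊆ I → ((D U).map ι).Nodup := by
    intro U hU
    refine (hD U).1.map_on fun x hx y hy hxy => ?_
    have hx' : x ∈ U := (hD U).2 ▸ List.mem_toFinset.mpr hx
    have hy' : y ∈ U := (hD U).2 ▸ List.mem_toFinset.mpr hy
    exact hinj (Finset.mem_coe.mpr (hU hx')) (Finset.mem_coe.mpr (hU hy')) hxy
  have hmaptf : ∀ U : Finset L, ((D U).map ι).toFinset = U.image ι := by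
    intro U
    rw [toFinset_map, (hD U).2]
  -- membership of fvec of the map in Sub J
  have hsub : ∀ {x : FockSpace L →L[ℂ] FockSpace L}, (∀ v ∈ Sub J, x v ∈ Sub J) →
      ∀ v ∈ Sub J, x v ∈ Sub J := fun h => h
  by_cases hST : S = T
  · subst hST
    rw [if_pos rfl]
    obtain ⟨c, c', hc, hc', hfN, hfMN⟩ :=
      fvec_pair (hD S).1 (hD S).2 (hmapnd S hS) (hmaptf S)
        (hSJ.mono_right himgS)
    set fS := fvec ((D S).map ι) with hfS
    have hfS_mem : fS ∈ Sub J := by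
      rw [hfN]
      exact Submodule.smul_mem _ _ (ev_mem_Sub himgS)
    have hcomm := (mem_A_comm (X := S) (fun l hl => Finset.disjoint_right.mp hSJ hl) hb).1
    have hv_mem : (Gx S * b * Gx S) fS ∈ Sub J := by
      rw [ContinuousLinearMap.mul_apply, ContinuousLinearMap.mul_apply]
      exact Gx_mem_Sub _ ((mem_A_sub hb).1 _ (Gx_mem_Sub _ hfS_mem))
    have step1 : ⟪W S fS, b (W S fS)⟫_ℂ = ⟪fS, (Gx S * b * Gx S) fS⟫_ℂ := by
      rw [← ContinuousLinearMap.mul_apply b (W S), hcomm, ContinuousLinearMap.mul_apply,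
        ← adjoint_inner_right (W S), adjoint_W, WdW_self hSJ _ hv_mem]
    set γ : ℂ := if Even S.card then (1:ℂ) else (-1 : ℂ) ^ (S.image ι).card with hγ
    have hγγ : γ * γ = 1 := by
      rw [hγ]; split_ifs with h
      · rw [mul_one]
      · exact neg_one_pow_sq _
    have hGxev : Gx S (ev (S.image ι)) = γ • ev (S.image ι) := by
      rw [Gx_single, ← hγ]
    have step2 : ⟪fS, (Gx S * b * Gx S) fS⟫_ℂ = (b (ev (S.image ι))) (S.image ι) := by
      simp only [ContinuousLinearMap.mul_apply, hfN, map_smul, hGxev, inner_smul_left,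
        inner_smul_right, conj_of_sq hc', inner_ev_left, coord_smul, Gx_coord, ← hγ]
      calc c' * (γ * (c' * (γ * b (ev (Finset.image ι S)) (Finset.image ι S))))
          = (c' * c') * ((γ * γ) * b (ev (Finset.image ι S)) (Finset.image ι S)) := by ring
        _ = b (ev (Finset.image ι S)) (Finset.image ι S) := by rw [hc', hγγ, one_mul, one_mul]
    have step3 : ⟪fS, b fS⟫_ℂ = (b (ev (S.image ι))) (S.image ι) := by
      rw [hfN, inner_smul_left, conj_of_sq hc', map_smul, inner_ev_left, coord_smul,
        ← mul_assoc, hc', one_mul]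
    rw [hfMN, inner_smul_left, conj_of_sq hc, map_smul, inner_smul_right, step1, step2,
      ← mul_assoc, hc, one_mul, step3]
  · rw [if_neg hST]
    obtain ⟨c, c', hc, hc', hfN, hfMN⟩ :=
      fvec_pair (hD S).1 (hD S).2 (hmapnd S hS) (hmaptf S) (hSJ.mono_right himgS)
    obtain ⟨d, d', hd, hd', hgN, hgMN⟩ :=
      fvec_pair (hD T).1 (hD T).2 (hmapnd T hT) (hmaptf T) (hTJ.mono_right himgT)
    set fS := fvec ((D S).map ι) with hfS
    set fT := fvec ((D T).map ι) with hfT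
    have hfT_mem : fT ∈ Sub J := by
      rw [hgN]
      exact Submodule.smul_mem _ _ (ev_mem_Sub himgT)
    have hcomm := (mem_A_comm (X := T) (fun l hl => Finset.disjoint_right.mp hTJ hl) hb).1
    have hv_mem : (Gx T * b * Gx T) fT ∈ Sub J := by
      rw [ContinuousLinearMap.mul_apply, ContinuousLinearMap.mul_apply]
      exact Gx_mem_Sub _ ((mem_A_sub hb).1 _ (Gx_mem_Sub _ hfT_mem))
    have hzero : ⟪W S fS, b (W T fT)⟫_ℂ = 0 := by
      rw [← ContinuousLinearMap.mul_apply b (W T), hcomm, ContinuousLinearMap.mul_apply,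
        ← adjoint_inner_right (W S), adjoint_W, hfN, inner_smul_left, inner_ev_left,
        WdW_ne hSJ hTJ hST himgS _ hv_mem, mul_zero]
    rw [hfMN, hgMN, inner_smul_left, map_smul, inner_smul_right, hzero]
    ring


/-- Let `I ⊆ L` be finite, `ι : I → J` a bijection onto `J ⊆ L` with
`I ∩ J = ∅`, `(p_M)_{M ∈ D_I}` a probability distribution, and set
`Φ = Σ_{M ∈ D_I} p_M^{1/2} f_{M ι(M)}` and `ρ_{ι(I)} = Σ_{M ∈ D_I} p_M |f_{ι(M)}⟩⟨f_{ι(M)}|`.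
Then `⟨Φ, bΦ⟩ = Tr(ρ_{ι(I)} b)` for all `b ∈ A(ι(I))`. -/
theorem entangled_state_reduces_second
    {L : Type} [Fintype L] [LinearOrder L]
    (I J : Finset L) (ι : L → L)
    (hinj : Set.InjOn ι (I : Set L)) (himg : I.image ι = J) (hIJ : Disjoint I J)
    (D : Finset L → List L) (hD : IsEnum D)
    (p : Finset L → ℝ)
    (hp0 : ∀ S ∈ I.powerset, 0 ≤ p S) (hp1 : ∑ S ∈ I.powerset, p S = 1) :
    ∀ b ∈ A (I.image ι),
      ⟪Phi D p I ι, b (Phi D p I ι)⟫_ℂ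
        = Tr ((∑ S ∈ I.powerset,
            ((p S : ℝ) : ℂ) • ketbra (fvec ((D S).map ι)) (fvec ((D S).map ι))) * b) := by
  intro b hb
  have hIJ' : Disjoint I (I.image ι) := by rw [himg]; exact hIJ
  have keyfact : ∀ S ∈ I.powerset, ∀ T ∈ I.powerset,
      ⟪fvec (D S ++ (D S).map ι), b (fvec (D T ++ (D T).map ι))⟫_ℂ
        = if S = T then ⟪fvec ((D S).map ι), b (fvec ((D S).map ι))⟫_ℂ else 0 :=
    fun S hS T hT => key hinj hIJ' hD hb (Finset.mem_powerset.mp hS) (Finset.mem_powerset.mp hT)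
  have lhs_eq : ⟪Phi D p I ι, b (Phi D p I ι)⟫_ℂ
      = ∑ S ∈ I.powerset, ((p S : ℝ) : ℂ) *
          ⟪fvec ((D S).map ι), b (fvec ((D S).map ι))⟫_ℂ := by
    simp only [Phi, map_sum, map_smul, inner_sum, sum_inner, inner_smul_left, inner_smul_right]
    refine Finset.sum_congr rfl fun T hTpw => ?_
    have h1 : ∀ S ∈ I.powerset, conj ((Real.sqrt (p S) : ℂ)) *
        ⟪fvec (D S ++ (D S).map ι), b (fvec (D T ++ (D T).map ι))⟫_ℂ
        = if S = T then conj ((Real.sqrt (p S) : ℂ)) *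
            ⟪fvec ((D S).map ι), b (fvec ((D S).map ι))⟫_ℂ else 0 := fun S hS => by
      rw [keyfact S hS T hTpw, mul_ite, mul_zero]
    rw [Finset.sum_congr rfl h1, Finset.sum_ite_eq' I.powerset T _, if_pos hTpw,
      Complex.conj_ofReal, ← mul_assoc, ← Complex.ofReal_mul,
      Real.mul_self_sqrt (hp0 T hTpw)]
  have rhs_eq : Tr ((∑ S ∈ I.powerset,
      ((p S : ℝ) : ℂ) • ketbra (fvec ((D S).map ι)) (fvec ((D S).map ι))) * b)
      = ∑ S ∈ I.powerset, ((p S : ℝ) : ℂ) *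
          ⟪fvec ((D S).map ι), b (fvec ((D S).map ι))⟫_ℂ := by
    rw [Finset.sum_mul, Tr_sum]
    refine Finset.sum_congr rfl fun S hS => ?_
    rw [smul_mul_assoc, Tr_smul, Tr_ketbra_mul]
  rw [lhs_eq, rhs_eq]


end Fermion
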